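/- With ξ as above and additionally Eθ_1² < 1 and Eθ_1³ < 1, assuming the θ_i are symmetric about 1/2, the third moment satisfies Eξ³ = 3v³ / (2β³ (1 − Eθ_1²)(1 − Eθ_1³)). -/

import Mathlib

open MeasureTheory ProbabilityTheory Real Filter

/-- Limit of a linear recursion `x (n+1) = u n + q * x n` with `u n → U`, `0 ≤ q < 1`. -/
lemma aux_tendsto_linear_rec {q U : ℝ} (hq0 : 0 ≤ q) (hq1 : q < 1) {u : ℕ → ℝ}
    (hu : Filter.Tendsto u atTop (nhds U)) {x : ℕ → ℝ}
    (hx : ∀ n, x (n + 1) = u n + q * x n) :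
    Filter.Tendsto x atTop (nhds (U / (1 - q))) := by
  have h1q : (0:ℝ) < 1 - q := by linarith
  set L := U / (1 - q) with hL
  have hLfix : U + q * L = L := by
    have h1q' := h1q.ne'
    have e : U / (1 - q) * (1 - q) = U := div_mul_cancel₀ U h1q'
    linear_combination -e
  rw [Metric.tendsto_atTop]
  intro ε hε
  obtain ⟨N, hN⟩ := (Metric.tendsto_atTop.1 hu) (ε * (1 - q) / 2) (by positivity)
  have key : ∀ k, |x (N + k) - L| ≤ q ^ k * |x N - L| + ε / 2 := by
    intro k
    induction k with
    | zero => simp; nlinarith [abs_nonneg (x N - L)]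
    | succ k ih =>
      have e : x (N + k + 1) - L = (u (N + k) - U) + q * (x (N + k) - L) := by
        rw [hx (N + k)]; nlinarith [hLfix]
      have hd : |u (N + k) - U| ≤ ε * (1 - q) / 2 := by
        have := hN (N + k) (by omega)
        rw [Real.dist_eq] at this
        linarith
      have : |x (N + k + 1) - L| ≤ |u (N + k) - U| + q * |x (N + k) - L| := by
        rw [e]
        calc |(u (N + k) - U) + q * (x (N + k) - L)|
            ≤ |u (N + k) - U| + |q * (x (N + k) - L)| := abs_add_le _ _
          _ = |u (N + k) - U| + q * |x (N + k) - L| := by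
              rw [abs_mul, abs_of_nonneg hq0]
      have h2 : q * |x (N + k) - L| ≤ q * (q ^ k * |x N - L| + ε / 2) :=
        mul_le_mul_of_nonneg_left ih hq0
      have : |x (N + (k + 1)) - L| ≤ ε * (1 - q) / 2 + q * (q ^ k * |x N - L| + ε / 2) := by
        have hrw : N + (k + 1) = N + k + 1 := by omega
        rw [hrw]
        linarith
      calc |x (N + (k + 1)) - L| ≤ ε * (1 - q) / 2 + q * (q ^ k * |x N - L| + ε / 2) := this
        _ ≤ q ^ (k + 1) * |x N - L| + ε / 2 := by
            have hq : q ^ (k + 1) = q * q ^ k := by ring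
            rw [hq]; ring_nf; nlinarith
  obtain ⟨K, hK⟩ : ∃ K, q ^ K * |x N - L| < ε / 2 := by
    have h0 : Filter.Tendsto (fun k => q ^ k * |x N - L|) atTop (nhds 0) := by
      simpa using (tendsto_pow_atTop_nhds_zero_of_lt_one hq0 hq1).mul_const |x N - L|
    exact (h0.eventually (gt_mem_nhds (by positivity : (0:ℝ) < ε / 2))).exists
  refine ⟨N + K, fun n hn => ?_⟩
  obtain ⟨k, rfl, hKk⟩ : ∃ k, n = N + k ∧ K ≤ k := ⟨n - N, by omega, by omega⟩
  have hpk : q ^ k ≤ q ^ K := pow_le_pow_of_le_one hq0 hq1.le hKk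
  have : |x (N + k) - L| ≤ q ^ k * |x N - L| + ε / 2 := key k
  have h2 : q ^ k * |x N - L| ≤ q ^ K * |x N - L| :=
    mul_le_mul_of_nonneg_right hpk (abs_nonneg _)
  rw [Real.dist_eq]
  linarith

/-- first-moment recursion sequence -/
noncomputable def auxM1 (t1 a : ℝ) : ℕ → ℝ
  | 0 => 0
  | n + 1 => t1 + a * auxM1 t1 a n

/-- second-moment recursion sequence -/
noncomputable def auxM2 (t1 t2 a b : ℝ) : ℕ → ℝ
  | 0 => 0
  | n + 1 => t2 + 2 * t1 * a * auxM1 t1 a n + b * auxM2 t1 t2 a b n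

/-- third-moment recursion sequence -/
noncomputable def auxM3 (t1 t2 t3 a b c : ℝ) : ℕ → ℝ
  | 0 => 0
  | n + 1 => t3 + 3 * t2 * a * auxM1 t1 a n + 3 * t1 * b * auxM2 t1 t2 a b n
      + c * auxM3 t1 t2 t3 a b c n

set_option maxHeartbeats 2000000 in
theorem third_moment_of_limiting_mass
    {Ω : Type*} [MeasurableSpace Ω] (P : Measure Ω) [IsProbabilityMeasure P]
    (β v δ : ℝ) (hβ : 0 < β) (hv : 0 < v) (hδ : 0 < δ) (hδ' : δ < 1 / 2)
    (τ θ : ℕ → Ω → ℝ)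
    (hτmeas : ∀ i, Measurable (τ i)) (hθmeas : ∀ i, Measurable (θ i))
    (hindep : iIndepFun (Sum.elim τ θ) P)
    (hτdist : ∀ i, ∀ t : ℝ, 0 ≤ t →
      P {ω | τ i ω > t} = ENNReal.ofReal (Real.exp (-(2 * β) * t)))
    (hθid : ∀ i j, IdentDistrib (θ i) (θ j) P P)
    (hθsym : IdentDistrib (θ 1) (fun ω => 1 - θ 1 ω) P P)
    (hθsq : ∫ ω, (θ 1 ω) ^ 2 ∂P < 1)
    (hθcube : ∫ ω, (θ 1 ω) ^ 3 ∂P < 1)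
    (hθrange : ∀ i ω, θ i ω ∈ Set.Icc δ (1 - δ))
    (ξ : Ω → ℝ)
    (hξ : ∀ ω, ξ ω = v * ∑' n : ℕ, τ n ω * ∏ i ∈ Finset.range n, θ (i + 1) ω) :
    ∫ ω, (ξ ω) ^ 3 ∂P
      = 3 * v ^ 3 /
        (2 * β ^ 3 * (1 - ∫ ω, (θ 1 ω) ^ 2 ∂P) * (1 - ∫ ω, (θ 1 ω) ^ 3 ∂P)) := by
  classical
  have hb2 : (0:ℝ) < 2 * β := by linarith
  -- θ basic facts
  have hθpos : ∀ j ω, 0 < θ j ω := fun j ω => lt_of_lt_of_le hδ (hθrange j ω).1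
  have hθle1 : ∀ j ω, θ j ω ≤ 1 := fun j ω => le_trans (hθrange j ω).2 (by linarith)
  have hθint : ∀ (j p : ℕ), Integrable (fun ω => θ j ω ^ p) P := by
    intro j p
    refine Integrable.mono' (integrable_const (1:ℝ)) ((hθmeas j).pow_const p).aestronglyMeasurable ?_
    refine Filter.Eventually.of_forall fun ω => ?_
    rw [Real.norm_eq_abs, abs_of_nonneg (pow_nonneg (hθpos j ω).le p)]
    exact pow_le_one₀ (le_of_lt (hθpos j ω)) (hθle1 j ω)
  have hθmom : ∀ (j p : ℕ), ∫ ω, θ j ω ^ p ∂P = ∫ ω, θ 1 ω ^ p ∂P := by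
    intro j p
    exact ((hθid j 1).comp (measurable_id.pow_const p)).integral_eq
  set av : ℝ := ∫ ω, θ 1 ω ∂P with hav
  set bv : ℝ := ∫ ω, (θ 1 ω) ^ 2 ∂P with hbv
  set cv : ℝ := ∫ ω, (θ 1 ω) ^ 3 ∂P with hcv
  have hav12 : av = 1 / 2 := by
    have h1 : av = ∫ ω, (1 - θ 1 ω) ∂P := hθsym.integral_eq
    have h2 : ∫ ω, (1 - θ 1 ω) ∂P = 1 - av := by
      rw [integral_sub (integrable_const 1) (by simpa using hθint 1 1)]
      simp [hav]
    rw [h2] at h1; linarith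
  have hbv0 : 0 ≤ bv := integral_nonneg fun ω => pow_nonneg (hθpos 1 ω).le 2
  have hcv0 : 0 ≤ cv := integral_nonneg fun ω => pow_nonneg (hθpos 1 ω).le 3
  -- τ basic facts
  have hτpos : ∀ᵐ ω ∂P, ∀ n, 0 < τ n ω := by
    rw [ae_all_iff]
    intro n
    have h0 := hτdist n 0 le_rfl
    simp only [mul_zero, neg_zero, Real.exp_zero, ENNReal.ofReal_one, neg_mul, zero_mul] at h0
    have hms : MeasurableSet {ω | τ n ω > 0} := (hτmeas n) measurableSet_Ioi
    have : P {ω | τ n ω > 0}ᶜ = 0 := by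
      rw [prob_compl_eq_one_sub hms, h0]
      simp
    refine measure_mono_null ?_ this
    intro ω hω
    simpa using hω
  have hτlint : ∀ (i n : ℕ), ∫⁻ ω, ENNReal.ofReal ((τ i ω) ^ (n + 1)) ∂P
      = ENNReal.ofReal ((Nat.factorial (n + 1) : ℝ) / (2 * β) ^ (n + 1)) := by
    intro i n
    have hτnn : (0:Ω → ℝ) ≤ᵐ[P] τ i := by
      filter_upwards [hτpos] with ω h using le_of_lt (h i)
    have layer := lintegral_comp_eq_lintegral_meas_lt_mul P hτnn (hτmeas i).aemeasurable
      (g := fun t => ((n:ℝ) + 1) * t ^ n)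
      (fun t _ => (intervalIntegral.intervalIntegrable_pow n).const_mul _)
      (by
        filter_upwards [ae_restrict_mem measurableSet_Ioi] with t ht
        have ht0 : (0:ℝ) < t := ht
        exact mul_nonneg (by positivity) (pow_nonneg ht0.le n))
    have hlhs : ∀ ω : Ω, ENNReal.ofReal (∫ t in (0:ℝ)..(τ i ω), ((n:ℝ) + 1) * t ^ n)
        = ENNReal.ofReal ((τ i ω) ^ (n + 1)) := by
      intro ω
      congr 1
      rw [intervalIntegral.integral_const_mul, integral_pow]
      have : ((n:ℝ) + 1) ≠ 0 := by positivity
      field_simp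
      simp
    rw [lintegral_congr hlhs] at layer
    rw [layer]
    have hrhs : ∫⁻ t in Set.Ioi (0:ℝ), P {a | t < τ i a} * ENNReal.ofReal (((n:ℝ) + 1) * t ^ n)
        = ∫⁻ t in Set.Ioi (0:ℝ),
            ENNReal.ofReal (((n:ℝ) + 1) * (t ^ n * Real.exp (-(2 * β) * t))) := by
      refine setLIntegral_congr_fun measurableSet_Ioi (fun t ht => ?_)
      have ht0 : (0:ℝ) < t := ht
      rw [hτdist i t ht0.le]
      rw [← ENNReal.ofReal_mul (by positivity)]
      congr 1
      ring
    rw [hrhs]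
    have hIntOn : IntegrableOn (fun t : ℝ => t ^ n * Real.exp (-(2 * β) * t))
        (Set.Ioi 0) volume := by
      have := integrableOn_rpow_mul_exp_neg_mul_rpow
        (by exact_mod_cast neg_one_lt_zero.trans_le (Nat.cast_nonneg n) : (-1:ℝ) < (n:ℝ))
        one_pos hb2
      simpa [Real.rpow_natCast, Real.rpow_one] using this
    rw [← MeasureTheory.ofReal_integral_eq_lintegral_ofReal (hIntOn.const_mul _)
      (by
        filter_upwards [ae_restrict_mem measurableSet_Ioi] with t ht
        have ht0 : (0:ℝ) < t := ht
        exact mul_nonneg (by positivity)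
          (mul_nonneg (pow_nonneg ht0.le n) (Real.exp_nonneg _)))]
    congr 1
    rw [MeasureTheory.integral_const_mul]
    have hval : ∫ t in Set.Ioi (0:ℝ), t ^ n * Real.exp (-(2 * β) * t)
        = (1 / (2 * β)) ^ (n + 1) * (Nat.factorial n : ℝ) := by
      have := Real.integral_rpow_mul_exp_neg_mul_Ioi
        (by positivity : (0:ℝ) < (n:ℝ) + 1) hb2
      rw [show ((n:ℝ) + 1 - 1) = (n:ℝ) by ring] at this
      rw [Real.Gamma_nat_eq_factorial] at this
      calc ∫ t in Set.Ioi (0:ℝ), t ^ n * Real.exp (-(2 * β) * t)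
          = ∫ t in Set.Ioi (0:ℝ), t ^ ((n:ℝ)) * Real.exp (-(2 * β * t)) := by
            refine setIntegral_congr_fun measurableSet_Ioi fun t ht => ?_
            rw [Real.rpow_natCast]
            ring_nf
        _ = (1 / (2 * β)) ^ ((n:ℝ) + 1) * (Nat.factorial n : ℝ) := this
        _ = (1 / (2 * β)) ^ (n + 1) * (Nat.factorial n : ℝ) := by
            rw [show ((n:ℝ) + 1) = ((n + 1 : ℕ) : ℝ) by push_cast; ring, Real.rpow_natCast]
    rw [hval]
    rw [Nat.factorial_succ]
    push_cast
    field_simp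
    rw [← mul_pow, one_div, inv_mul_cancel₀ hb2.ne', one_pow]
  have hτint : ∀ (i n : ℕ), Integrable (fun ω => τ i ω ^ (n + 1)) P := by
    intro i n
    constructor
    · exact ((hτmeas i).pow_const (n + 1)).aestronglyMeasurable
    · rw [MeasureTheory.hasFiniteIntegral_iff_norm]
      have : ∫⁻ ω, ENNReal.ofReal ‖τ i ω ^ (n + 1)‖ ∂P
          = ∫⁻ ω, ENNReal.ofReal (τ i ω ^ (n + 1)) ∂P := by
        refine lintegral_congr_ae ?_
        filter_upwards [hτpos] with ω h
        rw [Real.norm_eq_abs, abs_of_nonneg (pow_nonneg (h i).le _)]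
      rw [this, hτlint i n]
      exact ENNReal.ofReal_lt_top
  have hτmom : ∀ (i n : ℕ), ∫ ω, τ i ω ^ (n + 1) ∂P
      = (Nat.factorial (n + 1) : ℝ) / (2 * β) ^ (n + 1) := by
    intro i n
    rw [integral_eq_lintegral_of_nonneg_ae
      (by filter_upwards [hτpos] with ω h using pow_nonneg (h i).le _)
      ((hτmeas i).pow_const (n + 1)).aestronglyMeasurable, hτlint i n,
      ENNReal.toReal_ofReal (by positivity)]
  -- partial sums
  set S : ℕ → ℕ → Ω → ℝ :=
    fun r N ω => ∑ n ∈ Finset.range N, τ (r + n) ω * ∏ i ∈ Finset.range n, θ (r + 1 + i) ω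
    with hSdef
  have hSmeas : ∀ r N, Measurable (S r N) := by
    intro r N
    refine Finset.measurable_sum _ fun n _ => ?_
    exact (hτmeas _).mul (Finset.measurable_prod _ fun i _ => hθmeas _)
  have hSrec : ∀ r N ω, S r (N + 1) ω = τ r ω + θ (r + 1) ω * S (r + 1) N ω := by
    intro r N ω
    simp only [hSdef]
    rw [Finset.sum_range_succ']
    have h0 : τ (r + 0) ω * ∏ i ∈ Finset.range 0, θ (r + 1 + i) ω = τ r ω := by simp
    rw [h0, Finset.mul_sum, add_comm]
    congr 1
    refine Finset.sum_congr rfl fun n _ => ?_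
    rw [Finset.prod_range_succ']
    have hp : (∏ i ∈ Finset.range n, θ (r + 1 + (i + 1)) ω)
        = ∏ i ∈ Finset.range n, θ (r + 1 + 1 + i) ω :=
      Finset.prod_congr rfl fun i _ => by
        rw [show r + 1 + (i + 1) = r + 1 + 1 + i from by omega]
    rw [hp, show r + (n + 1) = r + 1 + n from by omega, show r + 1 + 0 = r + 1 from rfl]
    ring
  have hSnn : ∀ r N ω, (∀ n, 0 < τ n ω) → 0 ≤ S r N ω := by
    intro r N ω hω
    refine Finset.sum_nonneg fun n _ => mul_nonneg (hω _).le ?_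
    exact Finset.prod_nonneg fun i _ => (hθpos _ ω).le
  have hSmono : ∀ r N ω, (∀ n, 0 < τ n ω) → S r N ω ≤ S r (N + 1) ω := by
    intro r N ω hω
    simp only [hSdef, Finset.sum_range_succ]
    have : 0 ≤ τ (r + N) ω * ∏ i ∈ Finset.range N, θ (r + 1 + i) ω :=
      mul_nonneg (hω _).le (Finset.prod_nonneg fun i _ => (hθpos _ ω).le)
    linarith
  -- integrability of powers of S
  have hSpow : ∀ r N m, Integrable (fun ω => S r N ω ^ m) P := by
    intro r N m
    cases m with
    | zero => simpa using integrable_const (1:ℝ)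
    | succ k =>
      refine Integrable.mono'
        (g := fun ω => (N:ℝ) ^ k * ∑ n ∈ Finset.range N, τ (r + n) ω ^ (k + 1))
        ((integrable_finset_sum _ fun n _ => hτint (r + n) k).const_mul _)
        ((hSmeas r N).pow_const _).aestronglyMeasurable ?_
      filter_upwards [hτpos] with ω hω
      rw [Real.norm_eq_abs, abs_of_nonneg (pow_nonneg (hSnn r N ω hω) _)]
      have h1 : S r N ω ≤ ∑ n ∈ Finset.range N, τ (r + n) ω := by
        refine Finset.sum_le_sum fun n _ => ?_
        calc τ (r + n) ω * ∏ i ∈ Finset.range n, θ (r + 1 + i) ω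
            ≤ τ (r + n) ω * 1 := by
              refine mul_le_mul_of_nonneg_left ?_ (hω _).le
              exact Finset.prod_le_one (fun i _ => (hθpos _ ω).le) fun i _ => hθle1 _ ω
          _ = τ (r + n) ω := mul_one _
      have h2 : S r N ω ^ (k + 1) ≤ (∑ n ∈ Finset.range N, τ (r + n) ω) ^ (k + 1) :=
        pow_le_pow_left₀ (hSnn r N ω hω) h1 _
      refine h2.trans ?_
      rcases Nat.eq_zero_or_pos N with hN | hN
      · subst hN; simp
      · have hcard : (0:ℝ) < (N:ℝ) ^ k := by positivity
        have := pow_sum_div_card_le_sum_pow (f := fun n => τ (r + n) ω)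
          (s := Finset.range N) (fun i _ => (hω _).le) k
        rw [Finset.card_range] at this
        rw [div_le_iff₀ hcard] at this
        calc (∑ n ∈ Finset.range N, τ (r + n) ω) ^ (k + 1)
            ≤ (∑ n ∈ Finset.range N, τ (r + n) ω ^ (k + 1)) * (N:ℝ) ^ k := this
          _ = (N:ℝ) ^ k * ∑ n ∈ Finset.range N, τ (r + n) ω ^ (k + 1) := by ring
  -- independence machinery
  have hfmeas : ∀ i : ℕ ⊕ ℕ, Measurable (Sum.elim τ θ i) := by
    rintro (i | i)
    exacts [hτmeas i, hθmeas i]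
  set Mσ : Set (ℕ ⊕ ℕ) → MeasurableSpace Ω :=
    fun A => ⨆ i ∈ A, MeasurableSpace.comap (Sum.elim τ θ i) Real.measurableSpace with hMσ
  have hMle : ∀ A, Mσ A ≤ ‹MeasurableSpace Ω› := by
    intro A
    refine iSup_le fun i => iSup_le fun _ => (hfmeas i).comap_le
  have hIndepAB : ∀ A B : Set (ℕ ⊕ ℕ), Disjoint A B → Indep (Mσ A) (Mσ B) P :=
    fun A B hAB => indep_iSup_of_disjoint (fun i => (hfmeas i).comap_le) hindep hAB
  have hmemτ : ∀ (A : Set (ℕ ⊕ ℕ)) (j : ℕ), Sum.inl j ∈ A → Measurable[Mσ A] (τ j) := by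
    intro A j hj
    exact Measurable.of_comap_le
      (le_biSup (fun i => MeasurableSpace.comap (Sum.elim τ θ i) Real.measurableSpace) hj)
  have hmemθ : ∀ (A : Set (ℕ ⊕ ℕ)) (j : ℕ), Sum.inr j ∈ A → Measurable[Mσ A] (θ j) := by
    intro A j hj
    exact Measurable.of_comap_le
      (le_biSup (fun i => MeasurableSpace.comap (Sum.elim τ θ i) Real.measurableSpace) hj)
  have hIndepFun' : ∀ (A B : Set (ℕ ⊕ ℕ)) (X Y : Ω → ℝ), Disjoint A B →
      Measurable[Mσ A] X → Measurable[Mσ B] Y → IndepFun X Y P := by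
    intro A B X Y hd hX hY
    exact indep_of_indep_of_le_left
      (indep_of_indep_of_le_right (hIndepAB A B hd) hY.comap_le) hX.comap_le
  -- index sets
  set R : ℕ → Set (ℕ ⊕ ℕ) :=
    fun r => {x | (∃ j, r ≤ j ∧ x = Sum.inl j) ∨ (∃ j, r + 1 ≤ j ∧ x = Sum.inr j)} with hR
  set Q : ℕ → Set (ℕ ⊕ ℕ) :=
    fun r => {x | (∃ j, r + 1 ≤ j ∧ x = Sum.inl j) ∨ (∃ j, r + 1 ≤ j ∧ x = Sum.inr j)} with hQ
  have hSmeasM : ∀ r N, Measurable[Mσ (R r)] (S r N) := by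
    intro r N
    refine Finset.measurable_sum _ fun n _ => Measurable.mul ?_ ?_
    · exact hmemτ _ _ (Or.inl ⟨r + n, by omega, rfl⟩)
    · exact Finset.measurable_prod _ fun i _ => hmemθ _ _ (Or.inr ⟨r + 1 + i, by omega, rfl⟩)
  have hRQ : ∀ r, R (r + 1) ⊆ Q r := by
    rintro r x (⟨j, hj, rfl⟩ | ⟨j, hj, rfl⟩)
    · exact Or.inl ⟨j, by omega, rfl⟩
    · exact Or.inr ⟨j, by omega, rfl⟩
  have hd1 : ∀ r : ℕ, Disjoint ({Sum.inl r} : Set (ℕ ⊕ ℕ)) (Q r) := by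
    intro r
    rw [Set.disjoint_singleton_left]
    rintro (⟨j, hj, hh⟩ | ⟨j, hj, hh⟩)
    · cases hh; omega
    · cases hh
  have hd2 : ∀ r : ℕ, Disjoint ({Sum.inr (r + 1)} : Set (ℕ ⊕ ℕ)) (R (r + 1)) := by
    intro r
    rw [Set.disjoint_singleton_left]
    rintro (⟨j, hj, hh⟩ | ⟨j, hj, hh⟩)
    · cases hh
    · cases hh; omega
  -- the key factorization
  have key : ∀ (r N j m : ℕ),
      ∫ ω, τ r ω ^ j * (θ (r + 1) ω ^ m * S (r + 1) N ω ^ m) ∂P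
        = (∫ ω, τ r ω ^ j ∂P) * ((∫ ω, θ (r + 1) ω ^ m ∂P) * (∫ ω, S (r + 1) N ω ^ m ∂P)) := by
    intro r N j m
    have hτM : Measurable[Mσ {Sum.inl r}] (τ r) := hmemτ _ r rfl
    have hθM : Measurable[Mσ {Sum.inr (r + 1)}] (θ (r + 1)) := hmemθ _ _ rfl
    have hθQ : Measurable[Mσ (Q r)] (θ (r + 1)) := hmemθ _ _ (Or.inr ⟨r + 1, le_rfl, rfl⟩)
    have hSQ : Measurable[Mσ (Q r)] (S (r + 1) N) :=
      (hSmeasM (r + 1) N).mono (biSup_mono (hRQ r)) le_rfl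
    have i1 : IndepFun (fun ω => τ r ω ^ j)
        (fun ω => θ (r + 1) ω ^ m * S (r + 1) N ω ^ m) P :=
      hIndepFun' _ _ _ _ (hd1 r) (hτM.pow_const j) ((hθQ.pow_const m).mul (hSQ.pow_const m))
    have i2 : IndepFun (fun ω => θ (r + 1) ω ^ m) (fun ω => S (r + 1) N ω ^ m) P :=
      hIndepFun' _ _ _ _ (hd2 r) (hθM.pow_const m) ((hSmeasM (r + 1) N).pow_const m)
    rw [i1.integral_fun_mul_eq_mul_integral ((hτmeas r).pow_const j).aestronglyMeasurable
      (((hθmeas _).pow_const m).mul ((hSmeas _ _).pow_const m)).aestronglyMeasurable]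
    rw [i2.integral_fun_mul_eq_mul_integral ((hθmeas _).pow_const m).aestronglyMeasurable
      ((hSmeas _ _).pow_const m).aestronglyMeasurable]
  -- independence of the summand pair (for integrability)
  have indep1 : ∀ (r N j m : ℕ), IndepFun (fun ω => τ r ω ^ j)
      (fun ω => θ (r + 1) ω ^ m * S (r + 1) N ω ^ m) P := by
    intro r N j m
    have hτM : Measurable[Mσ {Sum.inl r}] (τ r) := hmemτ _ r rfl
    have hθQ : Measurable[Mσ (Q r)] (θ (r + 1)) := hmemθ _ _ (Or.inr ⟨r + 1, le_rfl, rfl⟩)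
    have hSQ : Measurable[Mσ (Q r)] (S (r + 1) N) :=
      (hSmeasM (r + 1) N).mono (biSup_mono (hRQ r)) le_rfl
    exact hIndepFun' _ _ _ _ (hd1 r) (hτM.pow_const j) ((hθQ.pow_const m).mul (hSQ.pow_const m))
  -- values of τ moments
  have hT1 : ∀ r : ℕ, ∫ ω, τ r ω ^ 1 ∂P = 1 / (2 * β) := by
    intro r
    have := hτmom r 0
    norm_num [Nat.factorial] at this ⊢
    linarith
  have hT2 : ∀ r : ℕ, ∫ ω, τ r ω ^ 2 ∂P = 2 / (2 * β) ^ 2 := by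
    intro r
    have := hτmom r 1
    norm_num [Nat.factorial] at this ⊢
    linarith
  have hT3 : ∀ r : ℕ, ∫ ω, τ r ω ^ 3 ∂P = 6 / (2 * β) ^ 3 := by
    intro r
    have := hτmom r 2
    norm_num [Nat.factorial] at this ⊢
    linarith
  set t1 : ℝ := 1 / (2 * β) with ht1
  set t2 : ℝ := 2 / (2 * β) ^ 2 with ht2
  set t3 : ℝ := 6 / (2 * β) ^ 3 with ht3
  -- the moment induction
  have main : ∀ N r,
      (∫ ω, S r N ω ^ 1 ∂P = auxM1 t1 av N) ∧
      (∫ ω, S r N ω ^ 2 ∂P = auxM2 t1 t2 av bv N) ∧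
      (∫ ω, S r N ω ^ 3 ∂P = auxM3 t1 t2 t3 av bv cv N) := by
    intro N
    induction N with
    | zero =>
      intro r
      have h0 : ∀ ω, S r 0 ω = 0 := fun ω => by simp [hSdef]
      refine ⟨?_, ?_, ?_⟩ <;> simp [h0, auxM1, auxM2, auxM3]
    | succ N ih =>
      intro r
      obtain ⟨ih1, ih2, ih3⟩ := ih (r + 1)
      have hθSint : ∀ m, Integrable (fun ω => θ (r + 1) ω ^ m * S (r + 1) N ω ^ m) P := by
        intro m
        refine Integrable.mono' (hSpow (r + 1) N m)
          (((hθmeas _).pow_const m).mul ((hSmeas _ _).pow_const m)).aestronglyMeasurable ?_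
        filter_upwards [hτpos] with ω hω
        have h1 : 0 ≤ S (r + 1) N ω := hSnn _ _ _ hω
        rw [Real.norm_eq_abs, abs_mul, abs_of_nonneg (pow_nonneg (hθpos _ ω).le m),
          abs_of_nonneg (pow_nonneg h1 m)]
        calc θ (r + 1) ω ^ m * S (r + 1) N ω ^ m
            ≤ 1 * S (r + 1) N ω ^ m := by
              refine mul_le_mul_of_nonneg_right ?_ (pow_nonneg h1 m)
              exact pow_le_one₀ (hθpos _ ω).le (hθle1 _ ω)
          _ = S (r + 1) N ω ^ m := one_mul _
      have hτpow : ∀ j : ℕ, Integrable (fun ω => τ r ω ^ j) P := by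
        intro j
        cases j with
        | zero => simpa using integrable_const (1 : ℝ)
        | succ k => exact hτint r k
      have hprod : ∀ j m : ℕ,
          Integrable (fun ω => τ r ω ^ j * (θ (r + 1) ω ^ m * S (r + 1) N ω ^ m)) P :=
        fun j m => (indep1 r N j m).integrable_mul (hτpow j) (hθSint m)
      have hθm : ∀ m, ∫ ω, θ (r + 1) ω ^ m ∂P = ∫ ω, θ 1 ω ^ m ∂P := fun m => hθmom (r + 1) m
      have hone : ∀ ω : Ω, θ (r + 1) ω ^ 0 * S (r + 1) N ω ^ 0 = 1 := fun ω => by simp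
      -- first moment
      have e1 : ∫ ω, S r (N + 1) ω ^ 1 ∂P = auxM1 t1 av (N + 1) := by
        have ee : ∀ ω, S r (N + 1) ω ^ 1
            = τ r ω ^ 1 * (θ (r + 1) ω ^ 0 * S (r + 1) N ω ^ 0)
              + τ r ω ^ 0 * (θ (r + 1) ω ^ 1 * S (r + 1) N ω ^ 1) := by
          intro ω; rw [pow_one, hSrec]; ring
        rw [integral_congr_ae (Filter.Eventually.of_forall ee),
          integral_add (hprod 1 0) (hprod 0 1), key r N 1 0, key r N 0 1]
        simp only [pow_zero, integral_const, measure_univ, probReal_univ, ENNReal.toReal_one, smul_eq_mul,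
          mul_one, one_mul]
        rw [hT1 r, hθm 1, ih1]
        simp only [auxM1, auxM2, auxM3, pow_one, ← hav, ← hbv, ← hcv]
        try ring
      -- second moment
      have e2 : ∫ ω, S r (N + 1) ω ^ 2 ∂P = auxM2 t1 t2 av bv (N + 1) := by
        have ee : ∀ ω, S r (N + 1) ω ^ 2
            = τ r ω ^ 2 * (θ (r + 1) ω ^ 0 * S (r + 1) N ω ^ 0)
              + 2 * (τ r ω ^ 1 * (θ (r + 1) ω ^ 1 * S (r + 1) N ω ^ 1))
              + τ r ω ^ 0 * (θ (r + 1) ω ^ 2 * S (r + 1) N ω ^ 2) := by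
          intro ω; rw [hSrec]; ring
        have hA := hprod 2 0
        have hB : Integrable
            (fun ω => 2 * (τ r ω ^ 1 * (θ (r + 1) ω ^ 1 * S (r + 1) N ω ^ 1))) P :=
          (hprod 1 1).const_mul 2
        have hC := hprod 0 2
        have hAB : Integrable (fun ω => τ r ω ^ 2 * (θ (r + 1) ω ^ 0 * S (r + 1) N ω ^ 0)
            + 2 * (τ r ω ^ 1 * (θ (r + 1) ω ^ 1 * S (r + 1) N ω ^ 1))) P := hA.add hB
        rw [integral_congr_ae (Filter.Eventually.of_forall ee),
          integral_add hAB hC, integral_add hA hB,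
          integral_const_mul, key r N 2 0, key r N 1 1, key r N 0 2]
        simp only [pow_zero, integral_const, measure_univ, probReal_univ, ENNReal.toReal_one, smul_eq_mul,
          mul_one, one_mul]
        rw [hT2 r, hT1 r, hθm 1, hθm 2, ih1, ih2]
        simp only [auxM1, auxM2, auxM3, pow_one, ← hav, ← hbv, ← hcv]
        try ring
      -- third moment
      have e3 : ∫ ω, S r (N + 1) ω ^ 3 ∂P = auxM3 t1 t2 t3 av bv cv (N + 1) := by
        have ee : ∀ ω, S r (N + 1) ω ^ 3
            = τ r ω ^ 3 * (θ (r + 1) ω ^ 0 * S (r + 1) N ω ^ 0)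
              + 3 * (τ r ω ^ 2 * (θ (r + 1) ω ^ 1 * S (r + 1) N ω ^ 1))
              + 3 * (τ r ω ^ 1 * (θ (r + 1) ω ^ 2 * S (r + 1) N ω ^ 2))
              + τ r ω ^ 0 * (θ (r + 1) ω ^ 3 * S (r + 1) N ω ^ 3) := by
          intro ω; rw [hSrec]; ring
        have hA := hprod 3 0
        have hB : Integrable
            (fun ω => 3 * (τ r ω ^ 2 * (θ (r + 1) ω ^ 1 * S (r + 1) N ω ^ 1))) P :=
          (hprod 2 1).const_mul 3
        have hC : Integrable
            (fun ω => 3 * (τ r ω ^ 1 * (θ (r + 1) ω ^ 2 * S (r + 1) N ω ^ 2))) P :=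
          (hprod 1 2).const_mul 3
        have hD := hprod 0 3
        have hAB : Integrable (fun ω => τ r ω ^ 3 * (θ (r + 1) ω ^ 0 * S (r + 1) N ω ^ 0)
            + 3 * (τ r ω ^ 2 * (θ (r + 1) ω ^ 1 * S (r + 1) N ω ^ 1))) P := hA.add hB
        have hABC : Integrable (fun ω => τ r ω ^ 3 * (θ (r + 1) ω ^ 0 * S (r + 1) N ω ^ 0)
            + 3 * (τ r ω ^ 2 * (θ (r + 1) ω ^ 1 * S (r + 1) N ω ^ 1))
            + 3 * (τ r ω ^ 1 * (θ (r + 1) ω ^ 2 * S (r + 1) N ω ^ 2))) P := hAB.add hC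
        rw [integral_congr_ae (Filter.Eventually.of_forall ee),
          integral_add hABC hD, integral_add hAB hC, integral_add hA hB,
          integral_const_mul, integral_const_mul,
          key r N 3 0, key r N 2 1, key r N 1 2, key r N 0 3]
        simp only [pow_zero, integral_const, measure_univ, probReal_univ, ENNReal.toReal_one, smul_eq_mul,
          mul_one, one_mul]
        rw [hT3 r, hT2 r, hT1 r, hθm 1, hθm 2, hθm 3, ih1, ih2, ih3]
        simp only [auxM1, auxM2, auxM3, pow_one, ← hav, ← hbv, ← hcv]
        try ring
      exact ⟨e1, e2, e3⟩
  -- limits of the moment sequences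
  have hav0 : (0:ℝ) ≤ av := by rw [hav12]; norm_num
  have hav1 : av < 1 := by rw [hav12]; norm_num
  have hM1 : Filter.Tendsto (auxM1 t1 av) atTop (nhds (t1 / (1 - av))) :=
    aux_tendsto_linear_rec hav0 hav1 (tendsto_const_nhds (x := t1)) (fun n => rfl)
  set L1 : ℝ := t1 / (1 - av) with hL1
  have hM2 : Filter.Tendsto (auxM2 t1 t2 av bv) atTop
      (nhds ((t2 + 2 * t1 * av * L1) / (1 - bv))) :=
    aux_tendsto_linear_rec hbv0 hθsq
      (tendsto_const_nhds.add (hM1.const_mul (2 * t1 * av))) (fun n => rfl)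
  set L2 : ℝ := (t2 + 2 * t1 * av * L1) / (1 - bv) with hL2
  have hM3 : Filter.Tendsto (auxM3 t1 t2 t3 av bv cv) atTop
      (nhds ((t3 + 3 * t2 * av * L1 + 3 * t1 * bv * L2) / (1 - cv))) :=
    aux_tendsto_linear_rec hcv0 hθcube
      ((tendsto_const_nhds.add (hM1.const_mul (3 * t2 * av))).add
        (hM2.const_mul (3 * t1 * bv))) (fun n => rfl)
  set L3 : ℝ := (t3 + 3 * t2 * av * L1 + 3 * t1 * bv * L2) / (1 - cv) with hL3
  have hbv1 : (0:ℝ) < 1 - bv := by linarith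
  have hcv1 : (0:ℝ) < 1 - cv := by linarith
  have hL3val : L3 = 3 / (2 * β ^ 3 * (1 - bv) * (1 - cv)) := by
    rw [hL3, hL2, hL1, ht1, ht2, ht3, hav12]
    have hβ0 : β ≠ 0 := ne_of_gt hβ
    have h1 : (1 - bv) ≠ 0 := ne_of_gt hbv1
    have h2 : (1 - cv) ≠ 0 := ne_of_gt hcv1
    field_simp
    ring
  have hL3nn : 0 ≤ L3 := by
    rw [hL3val]
    positivity
  -- the a.e. limit function
  set g : Ω → ℝ := fun ω => ∑' n : ℕ, τ n ω * ∏ i ∈ Finset.range n, θ (i + 1) ω with hg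
  have hterm_meas : ∀ n : ℕ, Measurable
      (fun ω => τ n ω * ∏ i ∈ Finset.range n, θ (i + 1) ω) :=
    fun n => (hτmeas n).mul (Finset.measurable_prod _ fun i _ => hθmeas _)
  have hS0 : ∀ N ω, S 0 N ω
      = ∑ n ∈ Finset.range N, τ n ω * ∏ i ∈ Finset.range n, θ (i + 1) ω := by
    intro N ω
    refine Finset.sum_congr rfl fun n _ => ?_
    rw [show 0 + n = n from by omega]
    congr 1
    exact Finset.prod_congr rfl fun i _ => by rw [show 0 + 1 + i = i + 1 from by omega]
  -- a.e. summability
  have hsummable : ∀ᵐ ω ∂P, Summable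
      (fun n : ℕ => τ n ω * ∏ i ∈ Finset.range n, θ (i + 1) ω) := by
    have hδ1 : (0:ℝ) ≤ 1 - δ := by linarith
    have hδ2 : (1 - δ : ℝ) < 1 := by linarith
    have hFmeas : Measurable (fun ω => ∑' n : ℕ,
        ENNReal.ofReal (τ n ω * ∏ i ∈ Finset.range n, θ (i + 1) ω)) :=
      Measurable.ennreal_tsum fun n => (hterm_meas n).ennreal_ofReal
    have hFlt : ∫⁻ ω, (∑' n : ℕ,
        ENNReal.ofReal (τ n ω * ∏ i ∈ Finset.range n, θ (i + 1) ω)) ∂P < ⊤ := by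
      rw [lintegral_tsum fun n => ((hterm_meas n).ennreal_ofReal).aemeasurable]
      have hbound : ∀ n : ℕ, ∫⁻ ω, ENNReal.ofReal
          (τ n ω * ∏ i ∈ Finset.range n, θ (i + 1) ω) ∂P
          ≤ ENNReal.ofReal ((1 - δ) ^ n) * ENNReal.ofReal (1 / (2 * β)) := by
        intro n
        have h1 : ∫⁻ ω, ENNReal.ofReal (τ n ω * ∏ i ∈ Finset.range n, θ (i + 1) ω) ∂P
            ≤ ∫⁻ ω, ENNReal.ofReal ((1 - δ) ^ n) * ENNReal.ofReal (τ n ω) ∂P := by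
          refine lintegral_mono_ae ?_
          filter_upwards [hτpos] with ω hω
          rw [← ENNReal.ofReal_mul (by positivity)]
          refine ENNReal.ofReal_le_ofReal ?_
          have hp : ∏ i ∈ Finset.range n, θ (i + 1) ω ≤ (1 - δ) ^ n := by
            calc ∏ i ∈ Finset.range n, θ (i + 1) ω
                ≤ ∏ _i ∈ Finset.range n, (1 - δ) :=
                  Finset.prod_le_prod (fun i _ => (hθpos _ ω).le)
                    (fun i _ => (hθrange _ ω).2)
              _ = (1 - δ) ^ n := by rw [Finset.prod_const, Finset.card_range]
          calc τ n ω * ∏ i ∈ Finset.range n, θ (i + 1) ω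
              ≤ τ n ω * (1 - δ) ^ n := mul_le_mul_of_nonneg_left hp (hω n).le
            _ = (1 - δ) ^ n * τ n ω := by ring
        have h2 : ∫⁻ ω, ENNReal.ofReal ((1 - δ) ^ n) * ENNReal.ofReal (τ n ω) ∂P
            = ENNReal.ofReal ((1 - δ) ^ n) * ∫⁻ ω, ENNReal.ofReal (τ n ω) ∂P :=
          lintegral_const_mul _ ((hτmeas n).ennreal_ofReal)
        have h3 : ∫⁻ ω, ENNReal.ofReal (τ n ω) ∂P = ENNReal.ofReal (1 / (2 * β)) := by
          have := hτlint n 0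
          simp only [pow_one, Nat.factorial] at this
          rw [show ∫⁻ ω, ENNReal.ofReal (τ n ω) ∂P
            = ∫⁻ ω, ENNReal.ofReal (τ n ω ^ 1) ∂P from by simp, this]
          norm_num
        rw [h2, h3] at h1
        exact h1
      calc ∑' n : ℕ, ∫⁻ ω, ENNReal.ofReal
            (τ n ω * ∏ i ∈ Finset.range n, θ (i + 1) ω) ∂P
          ≤ ∑' n : ℕ, ENNReal.ofReal ((1 - δ) ^ n) * ENNReal.ofReal (1 / (2 * β)) :=
            ENNReal.tsum_le_tsum hbound
        _ = (∑' n : ℕ, ENNReal.ofReal (1 - δ) ^ n) * ENNReal.ofReal (1 / (2 * β)) := by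
            rw [ENNReal.tsum_mul_right]
            congr 1
            exact tsum_congr fun n => by rw [ENNReal.ofReal_pow hδ1]
        _ = (1 - ENNReal.ofReal (1 - δ))⁻¹ * ENNReal.ofReal (1 / (2 * β)) := by
            rw [ENNReal.tsum_geometric]
        _ < ⊤ := by
            refine ENNReal.mul_lt_top ?_ ENNReal.ofReal_lt_top
            rw [ENNReal.inv_lt_top]
            refine tsub_pos_of_lt ?_
            exact ENNReal.ofReal_lt_one.mpr hδ2
    have hae := ae_lt_top hFmeas hFlt.ne
    filter_upwards [hae, hτpos] with ω hω hτω
    have hsum : Summable (fun n : ℕ => (ENNReal.ofReal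
        (τ n ω * ∏ i ∈ Finset.range n, θ (i + 1) ω)).toReal) :=
      ENNReal.summable_toReal hω.ne
    refine hsum.congr fun n => ?_
    rw [ENNReal.toReal_ofReal]
    exact mul_nonneg (hτω n).le (Finset.prod_nonneg fun i _ => (hθpos _ ω).le)
  have htendS : ∀ᵐ ω ∂P, Filter.Tendsto (fun N => S 0 N ω) atTop (nhds (g ω)) := by
    filter_upwards [hsummable] with ω hω
    have := hω.hasSum.tendsto_sum_nat
    refine this.congr fun N => ?_
    rw [hS0 N ω]
  have hgmeas : AEMeasurable g P :=
    aemeasurable_of_tendsto_metrizable_ae atTop (fun N => (hSmeas 0 N).aemeasurable) htendS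
  have hgnn : ∀ᵐ ω ∂P, 0 ≤ g ω := by
    filter_upwards [htendS, hτpos] with ω hω hτω
    exact le_of_tendsto_of_tendsto' tendsto_const_nhds hω fun N => hSnn 0 N ω hτω
  -- monotone convergence
  have hg3 : ∫ ω, g ω ^ 3 ∂P = L3 := by
    have hnn3 : 0 ≤ᵐ[P] fun ω => g ω ^ 3 := by
      filter_upwards [hgnn] with ω hω using pow_nonneg hω 3
    rw [integral_eq_lintegral_of_nonneg_ae hnn3 ((hgmeas.pow_const 3).aestronglyMeasurable)]
    have hstep : ∫⁻ ω, ENNReal.ofReal (g ω ^ 3) ∂P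
        = ⨆ N, ∫⁻ ω, ENNReal.ofReal (S 0 N ω ^ 3) ∂P := by
      rw [← lintegral_iSup'
        (fun N => (((hSmeas 0 N).pow_const 3).ennreal_ofReal).aemeasurable)
        (by
          filter_upwards [hτpos] with ω hω
          intro N M hNM
          refine ENNReal.ofReal_le_ofReal (pow_le_pow_left₀ (hSnn 0 N ω hω) ?_ 3)
          exact monotone_nat_of_le_succ (fun k => hSmono 0 k ω hω) hNM)]
      refine lintegral_congr_ae ?_
      filter_upwards [htendS, hτpos] with ω hω hτω
      have hmono : Monotone fun N => ENNReal.ofReal (S 0 N ω ^ 3) := by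
        intro N M hNM
        refine ENNReal.ofReal_le_ofReal (pow_le_pow_left₀ (hSnn 0 N ω hτω) ?_ 3)
        exact monotone_nat_of_le_succ (fun k => hSmono 0 k ω hτω) hNM
      have hlim : Filter.Tendsto (fun N => ENNReal.ofReal (S 0 N ω ^ 3)) atTop
          (nhds (ENNReal.ofReal (g ω ^ 3))) :=
        (ENNReal.continuous_ofReal.tendsto _).comp (hω.pow 3)
      exact (tendsto_nhds_unique (tendsto_atTop_iSup hmono) hlim).symm
    have hval : ∀ N, ∫⁻ ω, ENNReal.ofReal (S 0 N ω ^ 3) ∂P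
        = ENNReal.ofReal (auxM3 t1 t2 t3 av bv cv N) := by
      intro N
      rw [← MeasureTheory.ofReal_integral_eq_lintegral_ofReal (hSpow 0 N 3)
        (by filter_upwards [hτpos] with ω hω using pow_nonneg (hSnn 0 N ω hω) 3)]
      rw [(main N 0).2.2]
    have hM3mono : Monotone (auxM3 t1 t2 t3 av bv cv) := by
      refine monotone_nat_of_le_succ fun N => ?_
      rw [← (main N 0).2.2, ← (main (N + 1) 0).2.2]
      refine integral_mono_ae (hSpow 0 N 3) (hSpow 0 (N + 1) 3) ?_
      filter_upwards [hτpos] with ω hω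
      exact pow_le_pow_left₀ (hSnn 0 N ω hω) (hSmono 0 N ω hω) 3
    rw [hstep]
    have : (⨆ N, ∫⁻ ω, ENNReal.ofReal (S 0 N ω ^ 3) ∂P) = ENNReal.ofReal L3 := by
      simp only [hval]
      refine tendsto_nhds_unique
        (tendsto_atTop_iSup fun i j h => ENNReal.ofReal_le_ofReal (hM3mono h)) ?_
      exact (ENNReal.continuous_ofReal.tendsto _).comp hM3
    rw [this, ENNReal.toReal_ofReal hL3nn]
  -- conclusion
  have hfinal : ∫ ω, ξ ω ^ 3 ∂P = v ^ 3 * L3 := by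
    rw [← hg3, ← integral_const_mul]
    refine integral_congr_ae (Filter.Eventually.of_forall fun ω => ?_)
    simp only [hξ]
    ring
  rw [hfinal, hL3val]
  field_simp
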